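/- If X ~ BGamma(α,β,δ), then for t ≥ 0 the survival function satisfies R(t;α,β,δ) = {(δt/β)[δ(t+(α+1)/β) − 2]/Z}·f₀(t) + R₀(t), where f₀ and R₀ are the Gamma(α,β) density and survival function and Z = 2 + (αδ/β)[(1+α)δ/β − 2]. -/

import Mathlib

open MeasureTheory Real Set

noncomputable def Zc (α β δ : ℝ) : ℝ := 2 + (α * δ / β) * ((1 + α) * δ / β - 2)

noncomputable def bgammaPDF (α β δ x : ℝ) : ℝ :=
  (1 + (1 - δ * x) ^ 2) / Zc α β δ * (β ^ α / Real.Gamma α) * x ^ (α - 1) * Real.exp (-β * x)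

noncomputable def gammaPDF (α β x : ℝ) : ℝ :=
  β ^ α / Real.Gamma α * x ^ (α - 1) * Real.exp (-β * x)

lemma Zc_pos (α β δ : ℝ) (hα : 0 < α) (hβ : 0 < β) : 0 < Zc α β δ := by
  have key : (1 + α) * Zc α β δ = α * ((1 + α) * (δ / β) - 1) ^ 2 + α + 2 := by
    unfold Zc; field_simp; ring
  have h2 : 0 < (1 + α) * Zc α β δ := by
    rw [key]
    nlinarith [mul_nonneg hα.le (sq_nonneg ((1 + α) * (δ / β) - 1))]
  nlinarith [h2]

lemma int_aux {β : ℝ} (hβ : 0 < β) {t : ℝ} (ht : 0 ≤ t) (s : ℝ) (hs : 0 < s) :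
    IntegrableOn (fun x : ℝ => x ^ (s - 1) * Real.exp (-β * x)) (Ioi t) := by
  have h0 : IntegrableOn (fun x : ℝ => x ^ (s - 1) * Real.exp (-β * x)) (Ioi 0) := by
    have := integrableOn_rpow_mul_exp_neg_mul_rpow (p := 1) (s := s - 1) (b := β)
      (by linarith) zero_lt_one hβ
    refine this.congr_fun (fun x hx => ?_) measurableSet_Ioi
    simp only [Real.rpow_one]
  exact h0.mono_set (Ioi_subset_Ioi ht)

theorem bgamma_survival (α β δ t : ℝ) (hα : 0 < α) (hβ : 0 < β) (ht : 0 ≤ t) :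
    ∫ x in Ioi t, bgammaPDF α β δ x =
      (δ * t / β) * (δ * (t + (α + 1) / β) - 2) / Zc α β δ * gammaPDF α β t
        + ∫ x in Ioi t, gammaPDF α β x := by
  have hZ : 0 < Zc α β δ := Zc_pos α β δ hα hβ
  have hZ' : Zc α β δ ≠ 0 := hZ.ne'
  have hβ' : β ≠ 0 := hβ.ne'
  have hΓ : Real.Gamma α ≠ 0 := (Real.Gamma_pos_of_pos hα).ne'
  set K : ℝ := β ^ α / Real.Gamma α with hK
  set Z : ℝ := Zc α β δ with hZdef
  -- the antiderivative of bgammaPDF - gammaPDF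
  set G : ℝ → ℝ := fun x =>
    -((δ / β) * (δ * (x + (α + 1) / β) - 2) / Z) * K * (x ^ α * Real.exp (-β * x)) with hG
  -- integrability of gammaPDF
  have hgInt : IntegrableOn (fun x => gammaPDF α β x) (Ioi t) := by
    have h0 : IntegrableOn (fun x : ℝ => K * (x ^ (α - 1) * Real.exp (-β * x))) (Ioi t) :=
      (int_aux hβ ht α hα).const_mul K
    refine h0.congr_fun (fun x hx => ?_) measurableSet_Ioi
    simp [gammaPDF, hK, mul_assoc]
  -- integrability of the difference
  have hdInt : IntegrableOn (fun x => bgammaPDF α β δ x - gammaPDF α β x) (Ioi t) := by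
    have h1 : IntegrableOn
        (fun x : ℝ => (2 / Z - 1) * K * (x ^ (α - 1) * Real.exp (-β * x))) (Ioi t) :=
      (int_aux hβ ht α hα).const_mul _
    have h2 : IntegrableOn
        (fun x : ℝ => (-2 * δ / Z) * K * (x ^ (α + 1 - 1) * Real.exp (-β * x))) (Ioi t) :=
      (int_aux hβ ht (α + 1) (by linarith)).const_mul _
    have h3 : IntegrableOn
        (fun x : ℝ => (δ ^ 2 / Z) * K * (x ^ (α + 2 - 1) * Real.exp (-β * x))) (Ioi t) :=
      (int_aux hβ ht (α + 2) (by linarith)).const_mul _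
    have h4 : IntegrableOn (fun x : ℝ =>
        (2 / Z - 1) * K * (x ^ (α - 1) * Real.exp (-β * x))
          + (-2 * δ / Z) * K * (x ^ (α + 1 - 1) * Real.exp (-β * x))
          + (δ ^ 2 / Z) * K * (x ^ (α + 2 - 1) * Real.exp (-β * x))) (Ioi t) :=
      (h1.add h2).add h3
    refine h4.congr_fun (fun x hx => ?_) measurableSet_Ioi
    have hx0 : 0 < x := lt_of_le_of_lt ht hx
    have e1 : x ^ (α + 1 - 1) = x ^ (α - 1) * x := by
      rw [show α + 1 - 1 = (α - 1) + 1 by ring, Real.rpow_add_one hx0.ne']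
    have e2 : x ^ (α + 2 - 1) = x ^ (α - 1) * x * x := by
      rw [show α + 2 - 1 = (α - 1) + 1 + 1 by ring, Real.rpow_add_one hx0.ne',
        Real.rpow_add_one (by positivity)]
    simp only [bgammaPDF, gammaPDF, ← hZdef, ← hK, e1, e2]
    ring
  -- derivative of G
  have hderiv : ∀ x ∈ Ioi t, HasDerivAt G (bgammaPDF α β δ x - gammaPDF α β x) x := by
    intro x hx
    have hx0 : 0 < x := lt_of_le_of_lt ht hx
    have h1 : HasDerivAt (fun x : ℝ => -((δ / β) * (δ * (x + (α + 1) / β) - 2) / Z) * K)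
        (-((δ / β) * δ / Z) * K) x := by
      have : HasDerivAt (fun x : ℝ => x + (α + 1) / β) 1 x :=
        (hasDerivAt_id x).add_const _
      have := (((this.const_mul δ).sub_const 2).const_mul (δ / β)).div_const Z
      have := (this.neg.mul_const K)
      exact this.congr_deriv (by ring)
    have h2 : HasDerivAt (fun x : ℝ => x ^ α) (α * x ^ (α - 1)) x :=
      Real.hasDerivAt_rpow_const (Or.inl hx0.ne')
    have h3 : HasDerivAt (fun x : ℝ => Real.exp (-β * x)) (-β * Real.exp (-β * x)) x := by
      have : HasDerivAt (fun x : ℝ => -β * x) (-β) x := by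
        simpa using (hasDerivAt_id x).const_mul (-β)
      simpa [mul_comm] using this.exp
    have h4 := (h2.mul h3)
    have h5 := h1.mul h4
    convert h5 using 1
    · rfl
    · rfl
    · rfl
    have e1 : x ^ α = x ^ (α - 1) * x := by
      rw [← Real.rpow_add_one hx0.ne' (α - 1)]; ring_nf
    have hZ2 : (2 + (α * δ / β) * ((1 + α) * δ / β - 2)) ≠ 0 := hZ'
    have hid : (-(δ * β * α * 2) + δ ^ 2 * α + δ ^ 2 * α ^ 2 + β ^ 2 * 2) = β ^ 2 * Z := by
      rw [hZdef, Zc]; field_simp; ring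
    have hD : (-(δ * β * α * 2) + δ ^ 2 * α + δ ^ 2 * α ^ 2 + β ^ 2 * 2) ≠ 0 := by
      rw [hid]; exact (mul_pos (pow_pos hβ 2) hZ).ne'
    simp only [bgammaPDF, gammaPDF, ← hK, ← hZdef, Pi.mul_apply, e1, neg_mul]
    field_simp
    linear_combination K * hid
  -- G tends to 0 at infinity
  have htend : Filter.Tendsto G Filter.atTop (nhds 0) := by
    have t1 : Filter.Tendsto (fun x : ℝ => x ^ (α + 1) * Real.exp (-β * x))
        Filter.atTop (nhds 0) := tendsto_rpow_mul_exp_neg_mul_atTop_nhds_zero _ β hβ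
    have t2 : Filter.Tendsto (fun x : ℝ => x ^ α * Real.exp (-β * x))
        Filter.atTop (nhds 0) := tendsto_rpow_mul_exp_neg_mul_atTop_nhds_zero _ β hβ
    have := ((t1.const_mul (-(δ / β * δ / Z) * K)).add
      (t2.const_mul (-((δ / β) * (δ * ((α + 1) / β) - 2) / Z) * K)))
    rw [mul_zero, mul_zero, add_zero] at this
    refine this.congr' ?_
    filter_upwards [Filter.eventually_gt_atTop 0] with x hx0
    have e1 : x ^ (α + 1) = x ^ α * x := Real.rpow_add_one hx0.ne' α
    simp only [hG, e1]
    ring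
  -- continuity of G at t
  have hcont : ContinuousWithinAt G (Ici t) t := by
    have c1 : ContinuousAt (fun x : ℝ => x ^ α) t :=
      Real.continuousAt_rpow_const t α (Or.inr hα.le)
    have c2 : ContinuousAt G t := by
      refine ContinuousAt.mul (ContinuousAt.mul ?_ continuousAt_const)
        (c1.mul ?_)
      · fun_prop
      · exact (Real.continuous_exp.comp (continuous_const.mul continuous_id)).continuousAt
    exact c2.continuousWithinAt
  have key : ∫ x in Ioi t, (bgammaPDF α β δ x - gammaPDF α β x) = 0 - G t :=
    integral_Ioi_of_hasDerivAt_of_tendsto hcont hderiv hdInt htend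
  have hsplit : ∫ x in Ioi t, bgammaPDF α β δ x =
      (∫ x in Ioi t, (bgammaPDF α β δ x - gammaPDF α β x)) + ∫ x in Ioi t, gammaPDF α β x := by
    rw [← integral_add hdInt hgInt]
    simp
  rw [hsplit, key]
  congr 1
  -- boundary term identity
  rcases eq_or_lt_of_le ht with h | h
  · subst h
    simp [hG, Real.zero_rpow hα.ne']
  · have e1 : t ^ α = t ^ (α - 1) * t := by
      rw [← Real.rpow_add_one h.ne' (α - 1)]; ring_nf
    simp only [hG, gammaPDF, ← hK, e1]
    ring
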